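/- With the Whiteman generalized cyclotomic classes $D_0,\dots,D_5$ of order 6 modulo $n = n_1 n_2$, for each $0 \le j \le 5$ the multiset $D_j \bmod n_1$ consists of each element of $\{1, 2, \dots, n_1 - 1\}$ repeated exactly $(n_2-1)/6$ times; equivalently, for every residue $c$ with $1 \le c \le n_1 - 1$, the number of elements $d \in D_j$ with $d \equiv c \pmod{n_1}$ equals $(n_2-1)/6$. -/

import Mathlib

open Finset Polynomial

/-- The Whiteman generalized cyclotomic class `D_i` of order 6 modulo `n = n1 * n2`,
given a common primitive root `g` and the CRT element `x`. -/
def whitemanD (n1 n2 g x : ℕ) (i : ℕ) : Finset ℕ :=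
  (Finset.range ((n1 - 1) * (n2 - 1) / 6)).image (fun s => g ^ s * x ^ i % (n1 * n2))

/-- The set `{k * a : 1 ≤ k ≤ b - 1}` of nonzero multiples of `a` below `a * b`. -/
def multSet (a b : ℕ) : Finset ℕ :=
  (Finset.Icc 1 (b - 1)).image (fun k => k * a)


lemma count_range_mod (d m r : ℕ) (hr : r < d) :
    ((Finset.range (d * m)).filter (fun s => s % d = r)).card = m := by
  have hd : 0 < d := lt_of_le_of_lt (Nat.zero_le r) hr
  have himg : (Finset.range (d * m)).filter (fun s => s % d = r)
      = (Finset.range m).image (fun q => q * d + r) := by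
    ext s
    simp only [Finset.mem_filter, Finset.mem_range, Finset.mem_image]
    constructor
    · rintro ⟨hs, hmod⟩
      refine ⟨s / d, ?_, ?_⟩
      · have h1 := Nat.div_add_mod s d
        have h2 : s / d < m := Nat.div_lt_of_lt_mul (by omega)
        exact h2
      · have h1 := Nat.div_add_mod s d
        have h2 : d * (s / d) = (s / d) * d := Nat.mul_comm _ _
        omega
    · rintro ⟨q, hq, rfl⟩
      constructor
      · have : (q + 1) * d ≤ m * d := Nat.mul_le_mul_right d hq
        nlinarith
      · rw [Nat.add_mod, Nat.mul_mod_left, Nat.zero_add, Nat.mod_mod_of_dvd _ dvd_rfl, Nat.mod_eq_of_lt hr]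
  rw [himg, Finset.card_image_of_injOn, Finset.card_range]
  intro a _ b _ hab
  simp only at hab
  have : a * d = b * d := by omega
  exact Nat.eq_of_mul_eq_mul_right hd this

lemma count_range_shifted (d m j t0 : ℕ) (ht : t0 < d) :
    ((Finset.range (d * m)).filter (fun s => (s + j) % d = t0)).card = m := by
  have hd : 0 < d := lt_of_le_of_lt (Nat.zero_le t0) ht
  haveI : NeZero d := ⟨by omega⟩
  set r : ℕ := ((t0 : ZMod d) - (j : ZMod d)).val with hr
  have hrd : r < d := ZMod.val_lt _
  have hcast : ((r : ℕ) : ZMod d) = (t0 : ZMod d) - (j : ZMod d) :=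
    ZMod.natCast_rightInverse _
  have hcond : ∀ s, ((s + j) % d = t0) ↔ (s % d = r) := by
    intro s
    rw [show ((s + j) % d = t0) ↔ ((s + j) % d = t0 % d) by rw [Nat.mod_eq_of_lt ht],
      ← ZMod.natCast_eq_natCast_iff',
      show (s % d = r) ↔ (s % d = r % d) by rw [Nat.mod_eq_of_lt hrd],
      ← ZMod.natCast_eq_natCast_iff', hcast]
    push_cast
    constructor
    · intro h; rw [eq_sub_iff_add_eq]; exact h
    · intro h; rw [h]; ring
  simp only [hcond]
  exact count_range_mod d m r hrd

lemma exists_pow_eq (p : ℕ) (hp : p.Prime) (g : ZMod p) (hg : orderOf g = p - 1)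
    (c : ZMod p) (hc : c ≠ 0) : ∃ t < p - 1, g ^ t = c := by
  haveI : Fact p.Prime := ⟨hp⟩
  have hp1 : 0 < p - 1 := by have := hp.two_le; omega
  have hgu : IsUnit g := by
    apply IsUnit.of_pow_eq_one (n := p - 1)
    · rw [← hg]; exact pow_orderOf_eq_one g
    · omega
  obtain ⟨u, hu⟩ := hgu
  have hou : orderOf u = p - 1 := by rw [← orderOf_units, hu, hg]
  have hcard : Nat.card (ZMod p)ˣ = p - 1 := by
    rw [Nat.card_eq_fintype_card, ZMod.card_units_eq_totient, Nat.totient_prime hp]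
  have htop : Subgroup.zpowers u = ⊤ := by
    apply Subgroup.eq_top_of_card_eq
    rw [Nat.card_zpowers, hou, hcard]
  have hcu : IsUnit c := isUnit_iff_ne_zero.mpr hc
  obtain ⟨v, hv⟩ := hcu
  have hvmem : v ∈ Subgroup.zpowers u := htop ▸ Subgroup.mem_top v
  have hvmem' : v ∈ Submonoid.powers u := mem_powers_iff_mem_zpowers.mpr hvmem
  obtain ⟨t, htv⟩ := hvmem'
  simp only at htv
  refine ⟨t % (p - 1), Nat.mod_lt _ hp1, ?_⟩
  have : u ^ (t % (p - 1)) = v := by rw [← hou, pow_mod_orderOf, htv]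
  calc g ^ (t % (p-1)) = ((u : (ZMod p)ˣ) : ZMod p) ^ (t % (p-1)) := by rw [hu]
    _ = ((u ^ (t % (p-1)) : (ZMod p)ˣ) : ZMod p) := by push_cast; ring
    _ = c := by rw [this, hv]

lemma isUnit_pow_eq_pow_iff_modEq {M : Type*} [Monoid M] {a : M} (h : IsUnit a) {s t : ℕ} :
    a ^ s = a ^ t ↔ s ≡ t [MOD orderOf a] := by
  obtain ⟨u, rfl⟩ := h
  constructor
  · intro hh
    have h' : u ^ s = u ^ t := Units.ext (by simpa using hh)
    rw [show orderOf ((u : M)) = orderOf u from orderOf_units]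
    exact pow_eq_pow_iff_modEq.mp h'
  · intro hh
    rw [show orderOf ((u : M)) = orderOf u from orderOf_units] at hh
    have h' : u ^ s = u ^ t := pow_eq_pow_iff_modEq.mpr hh
    simpa using congrArg Units.val h'

theorem whitemanD_mod_n1_uniform
    (n1 n2 : ℕ) (hp1 : n1.Prime) (hp2 : n2.Prime) (hne : n1 ≠ n2)
    (ho1 : Odd n1) (ho2 : Odd n2)
    (hgcd : Nat.gcd (n1 - 1) (n2 - 1) = 6)
    (g x : ℕ)
    (hg1 : orderOf (g : ZMod n1) = n1 - 1)
    (hg2 : orderOf (g : ZMod n2) = n2 - 1)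
    (hx1 : x % n1 = g % n1) (hx2 : x % n2 = 1 % n2) :
    ∀ j ≤ 5, ∀ c, 1 ≤ c → c ≤ n1 - 1 →
      ((whitemanD n1 n2 g x j).filter (fun d => d % n1 = c)).card = (n2 - 1) / 6 := by
  intro j hj c hc1 hc2
  unfold whitemanD
  haveI : Fact n1.Prime := ⟨hp1⟩
  haveI : Fact n2.Prime := ⟨hp2⟩
  have h2n1 := hp1.two_le
  have h2n2 := hp2.two_le
  have h6d1 : 6 ∣ n1 - 1 := hgcd ▸ Nat.gcd_dvd_left _ _
  have h6d2 : 6 ∣ n2 - 1 := hgcd ▸ Nat.gcd_dvd_right _ _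
  obtain ⟨m, hm⟩ := h6d2
  have hm6 : (n2 - 1) / 6 = m := by rw [hm]; exact Nat.mul_div_cancel_left m (by norm_num)
  have hd1ge : 6 ≤ n1 - 1 := Nat.le_of_dvd (by omega) h6d1
  have he : (n1 - 1) * (n2 - 1) / 6 = (n1 - 1) * m := by
    rw [Nat.mul_div_assoc _ ⟨m, hm⟩, hm6]
  -- casts of x
  have hxg : (x : ZMod n1) = (g : ZMod n1) := (ZMod.natCast_eq_natCast_iff' x g n1).mpr hx1
  have hx2' : (x : ZMod n2) = 1 := by
    have := (ZMod.natCast_eq_natCast_iff' x 1 n2).mpr hx2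
    simpa using this
  -- lcm
  have hlcm : Nat.lcm (n1 - 1) (n2 - 1) = (n1 - 1) * m := by
    have h := Nat.gcd_mul_lcm (n1 - 1) (n2 - 1)
    rw [hgcd] at h
    refine Nat.eq_of_mul_eq_mul_left (show 0 < 6 by norm_num) ?_
    rw [h, hm]; ring
  have hgu1 : IsUnit (g : ZMod n1) :=
    IsUnit.of_pow_eq_one (n := n1 - 1) (by rw [← hg1]; exact pow_orderOf_eq_one _) (by omega)
  have hd2ge : 6 ≤ n2 - 1 := Nat.le_of_dvd (by omega) ⟨m, hm⟩
  have hgu2 : IsUnit (g : ZMod n2) :=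
    IsUnit.of_pow_eq_one (n := n2 - 1) (by rw [← hg2]; exact pow_orderOf_eq_one _) (by omega)
  -- injectivity
  have hinj : Set.InjOn (fun s => g ^ s * x ^ j % (n1 * n2))
      ((Finset.range ((n1 - 1) * m) : Finset ℕ) : Set ℕ) := by
    intro s hs t ht hst
    simp only [Finset.coe_range, Set.mem_Iio] at hs ht
    have hmodn : g ^ s * x ^ j ≡ g ^ t * x ^ j [MOD n1 * n2] := hst
    have h1 : g ^ s * x ^ j ≡ g ^ t * x ^ j [MOD n1] := hmodn.of_dvd (dvd_mul_right _ _)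
    have h2 : g ^ s * x ^ j ≡ g ^ t * x ^ j [MOD n2] := hmodn.of_dvd (dvd_mul_left _ _)
    have e1 : ((g ^ s * x ^ j : ℕ) : ZMod n1) = ((g ^ t * x ^ j : ℕ) : ZMod n1) :=
      (ZMod.natCast_eq_natCast_iff _ _ _).mpr h1
    have e2 : ((g ^ s * x ^ j : ℕ) : ZMod n2) = ((g ^ t * x ^ j : ℕ) : ZMod n2) :=
      (ZMod.natCast_eq_natCast_iff _ _ _).mpr h2
    push_cast at e1 e2
    rw [hxg] at e1
    rw [hx2'] at e2
    rw [← pow_add, ← pow_add] at e1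
    have m1 : s + j ≡ t + j [MOD n1 - 1] := by
      have := (isUnit_pow_eq_pow_iff_modEq hgu1).mp e1; rwa [hg1] at this
    have m1' : s ≡ t [MOD n1 - 1] := Nat.ModEq.add_right_cancel' j m1
    have m2 : s ≡ t [MOD n2 - 1] := by
      simp only [one_pow, mul_one] at e2
      have := (isUnit_pow_eq_pow_iff_modEq hgu2).mp e2; rwa [hg2] at this
    have i1 : ((n1 - 1 : ℕ) : ℤ) ∣ (t : ℤ) - s := Nat.modEq_iff_dvd.mp m1'
    have i2 : ((n2 - 1 : ℕ) : ℤ) ∣ (t : ℤ) - s := Nat.modEq_iff_dvd.mp m2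
    have il : ((Nat.lcm (n1-1) (n2-1) : ℕ) : ℤ) ∣ (t : ℤ) - s := by
      have := Int.coe_lcm_dvd i1 i2
      rwa [Int.lcm, Int.natAbs_natCast, Int.natAbs_natCast] at this
    have : s ≡ t [MOD (n1 - 1) * m] := Nat.modEq_iff_dvd.mpr (hlcm ▸ il)
    have hb : s % ((n1-1)*m) = t % ((n1-1)*m) := this
    rw [Nat.mod_eq_of_lt hs, Nat.mod_eq_of_lt ht] at hb
    exact hb
  -- t0
  have hcne : ((c : ℕ) : ZMod n1) ≠ 0 := by
    intro h
    rw [ZMod.natCast_eq_zero_iff] at h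
    have := Nat.le_of_dvd (by omega) h
    omega
  obtain ⟨t0, ht0, hgt0⟩ := exists_pow_eq n1 hp1 (g : ZMod n1) hg1 ((c : ℕ) : ZMod n1) hcne
  have hcond : ∀ s : ℕ, ((g ^ s * x ^ j % (n1 * n2)) % n1 = c) ↔ ((s + j) % (n1 - 1) = t0) := by
    intro s
    rw [Nat.mod_mod_of_dvd _ (dvd_mul_right n1 n2)]
    have step : (g ^ s * x ^ j) % n1 = c ↔
        ((g ^ s * x ^ j : ℕ) : ZMod n1) = ((c : ℕ) : ZMod n1) := by
      rw [ZMod.natCast_eq_natCast_iff', Nat.mod_eq_of_lt (show c < n1 by omega)]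
    rw [step]
    push_cast
    rw [hxg, ← pow_add, ← hgt0, isUnit_pow_eq_pow_iff_modEq hgu1, hg1]
    unfold Nat.ModEq
    rw [Nat.mod_eq_of_lt ht0]
  rw [he, hm6, Finset.filter_image,
    Finset.card_image_of_injOn (hinj.mono (by exact_mod_cast Finset.filter_subset _ _))]
  simp only [hcond]
  exact count_range_shifted (n1 - 1) m j t0 ht0
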